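/- arXiv:2209.04881 — 2 statements merged into one kernel-verified Lean document; each statement's English description precedes it below -/
import Mathlib

section
/- Let n ≥ 2, d ≥ 1, let a_1,…,a_n, b_1,…,b_n ∈ {0,1}^d be binary vectors, let t ≥ 1 be an integer, and let 0 ≤ μ < 1. Set C = 2 ln((1+μ)n/(1−μ)) and, for each i ∈ [n], define Y_i = Σ_{j=1}^n exp(−C · ‖a_i − b_j‖₂²). Suppose Ŷ_1,…,Ŷ_n are real numbers with |Ŷ_i − Y_i| ≤ μ |Y_i| for all i ∈ [n]. Then there exist i, j ∈ [n] with ‖a_i − b_j‖₂² ≤ t − 1 if and only if there exists i ∈ [n] with Ŷ_i > (1+μ) n · exp(−Ct). -/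
set_option maxHeartbeats 800000


open Finset Real

/-- Squared Euclidean distance between two real vectors. -/
noncomputable def sqdist {d : ℕ} (x y : Fin d → ℝ) : ℝ := ∑ r, (x r - y r) ^ 2

lemma sqdist_nat {d : ℕ} (x y : Fin d → ℝ)
    (hx : ∀ r, x r = 0 ∨ x r = 1) (hy : ∀ r, y r = 0 ∨ y r = 1) :
    ∃ m : ℕ, sqdist x y = m := by
  refine ⟨∑ r, if x r = y r then 0 else 1, ?_⟩
  rw [sqdist, Nat.cast_sum]
  refine Finset.sum_congr rfl fun r _ => ?_
  rcases hx r with h1 | h1 <;> rcases hy r with h2 | h2 <;>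
    simp [h1, h2] <;> norm_num

/-- Case analysis (element-wise multiplicative approximation) underlying the
reduction from BHCP to ℓ₂ (RBF-kernel) self-attention (Theorem 4). -/
theorem bhcp_l2_mult_approx (n d t : ℕ) (hn : 2 ≤ n) (hd : 1 ≤ d) (ht : 1 ≤ t)
    (a b : Fin n → Fin d → ℝ)
    (ha : ∀ i r, a i r = 0 ∨ a i r = 1) (hb : ∀ i r, b i r = 0 ∨ b i r = 1)
    (μ : ℝ) (hμ0 : 0 ≤ μ) (hμ1 : μ < 1)
    (C : ℝ) (hC : C = 2 * Real.log ((1 + μ) * n / (1 - μ)))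
    (Y : Fin n → ℝ)
    (hY : ∀ i, Y i = ∑ j, Real.exp (-C * sqdist (a i) (b j)))
    (Yhat : Fin n → ℝ)
    (hYhat : ∀ i, |Yhat i - Y i| ≤ μ * |Y i|) :
    (∃ i j, sqdist (a i) (b j) ≤ (t : ℝ) - 1) ↔
      (∃ i, Yhat i > (1 + μ) * (n : ℝ) * Real.exp (-C * (t : ℝ))) := by
  have h1μ : (0:ℝ) < 1 - μ := by linarith
  have hnR : (2:ℝ) ≤ (n:ℝ) := by exact_mod_cast hn
  set X : ℝ := (1 + μ) * n / (1 - μ) with hX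
  have hX1 : 1 < X := by
    rw [hX, lt_div_iff₀ h1μ]
    nlinarith
  have hX0 : 0 < X := by linarith
  have hexpC : Real.exp C = X ^ 2 := by
    rw [hC, mul_comm, Real.exp_mul, Real.exp_log hX0]
    norm_num
  have hC0 : 0 < C := by
    rw [hC]
    have := Real.log_pos hX1
    linarith
  have hμX : (1 - μ) * X = (1 + μ) * n := by
    rw [hX]
    field_simp [h1μ.ne']
  have hYpos : ∀ i, 0 < Y i := fun i => by
    rw [hY i]
    exact Finset.sum_pos (fun j _ => Real.exp_pos _) ⟨⟨0, by omega⟩, Finset.mem_univ _⟩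
  constructor
  · rintro ⟨i, j, hij⟩
    refine ⟨i, ?_⟩
    have hYi : Real.exp (-C * ((t:ℝ) - 1)) ≤ Y i := by
      rw [hY i]
      calc Real.exp (-C * ((t:ℝ) - 1)) ≤ Real.exp (-C * sqdist (a i) (b j)) := by
            apply Real.exp_le_exp.2
            nlinarith
        _ ≤ ∑ j', Real.exp (-C * sqdist (a i) (b j')) :=
            Finset.single_le_sum (f := fun j' => Real.exp (-C * sqdist (a i) (b j')))
              (fun j' _ => (Real.exp_pos _).le) (Finset.mem_univ j)
    have hlow : (1 - μ) * Y i ≤ Yhat i := by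
      have := hYhat i
      have hYi0 := hYpos i
      rw [abs_of_pos hYi0, abs_le] at this
      linarith
    have key : (1 + μ) * (n:ℝ) * Real.exp (-C * (t:ℝ)) < (1 - μ) * Real.exp (-C * ((t:ℝ) - 1)) := by
      have : Real.exp (-C * ((t:ℝ) - 1)) = Real.exp (-C * (t:ℝ)) * X ^ 2 := by
        rw [← hexpC, ← Real.exp_add]; ring_nf
      rw [this]
      have hE := Real.exp_pos (-C * (t:ℝ))
      calc (1 + μ) * (n:ℝ) * Real.exp (-C * (t:ℝ))
          < ((1 + μ) * n) * (Real.exp (-C * (t:ℝ)) * X) := by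
            nlinarith [mul_pos (mul_pos (show (0:ℝ) < (1 + μ) * n by nlinarith) hE)
              (sub_pos.mpr hX1)]
        _ = ((1 - μ) * X) * (Real.exp (-C * (t:ℝ)) * X) := by rw [hμX]
        _ = (1 - μ) * (Real.exp (-C * (t:ℝ)) * X ^ 2) := by ring
    have h1μY : (1 - μ) * Real.exp (-C * ((t:ℝ) - 1)) ≤ (1 - μ) * Y i :=
      mul_le_mul_of_nonneg_left hYi h1μ.le
    linarith
  · rintro ⟨i, hi⟩
    by_contra hno
    push_neg at hno
    have hall : ∀ j, (t:ℝ) ≤ sqdist (a i) (b j) := by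
      intro j
      obtain ⟨m, hm⟩ := sqdist_nat (a i) (b j) (ha i) (hb j)
      have hgt := hno i j
      rw [hm] at hgt ⊢
      by_contra hlt
      push_neg at hlt
      have hmt : m + 1 ≤ t := by exact_mod_cast Nat.cast_lt.mp (by exact_mod_cast hlt)
      have : (m:ℝ) ≤ (t:ℝ) - 1 := by
        have : ((m:ℕ):ℝ) + 1 ≤ (t:ℝ) := by exact_mod_cast hmt
        linarith
      linarith
    have hYup : Y i ≤ (n:ℝ) * Real.exp (-C * (t:ℝ)) := by
      rw [hY i]
      calc ∑ j, Real.exp (-C * sqdist (a i) (b j))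
          ≤ ∑ _j : Fin n, Real.exp (-C * (t:ℝ)) := by
            apply Finset.sum_le_sum
            intro j _
            apply Real.exp_le_exp.2
            nlinarith [hall j]
        _ = (n:ℝ) * Real.exp (-C * (t:ℝ)) := by simp [mul_comm]
    have hup : Yhat i ≤ (1 + μ) * Y i := by
      have := hYhat i
      rw [abs_of_pos (hYpos i), abs_le] at this
      linarith
    have : (1 + μ) * Y i ≤ (1 + μ) * ((n:ℝ) * Real.exp (-C * (t:ℝ))) :=
      mul_le_mul_of_nonneg_left hYup (by linarith)
    rw [← mul_assoc] at this
    linarith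
end

section
/- Let n ≥ 2, d ≥ 1, let a_1,…,a_n, b_1,…,b_n ∈ {0,1}^d be binary vectors, let t be an integer with 1 ≤ t ≤ d, and let μ be a real number with 0 ≤ μ ≤ n^{−3d} e^{−3d²}. Set C = ln n + d and, for each i ∈ [n], define N_i = Σ_{j=1}^n exp(C · a_i^T b_j), D_i = Σ_{j=1}^n exp(a_i^T a_j), and Y_i = N_i / (D_i + N_i). Suppose Ŷ_1,…,Ŷ_n are real numbers with |Ŷ_i − Y_i| ≤ μ for all i ∈ [n]. Then there exist i, j ∈ [n] with a_i^T b_j ≥ t if and only if there exists i ∈ [n] with Ŷ_i > exp(C(t−1)) / (exp(C(t−1)) + 1) + μ. -/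
open Finset Real

/-- Dot product of two real vectors. -/
noncomputable def dotp {d : ℕ} (x y : Fin d → ℝ) : ℝ := ∑ r, x r * y r

lemma dotp_nat {d : ℕ} {x y : Fin d → ℝ} (hx : ∀ r, x r = 0 ∨ x r = 1)
    (hy : ∀ r, y r = 0 ∨ y r = 1) : ∃ m : ℕ, dotp x y = m := by
  refine ⟨(Finset.univ.filter (fun r => x r * y r = 1)).card, ?_⟩
  rw [dotp, ← Finset.sum_boole]
  apply Finset.sum_congr rfl
  intro r _
  rcases hx r with h | h <;> rcases hy r with h' | h' <;> simp [h, h']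

lemma dotp_nonneg {d : ℕ} {x y : Fin d → ℝ} (hx : ∀ r, x r = 0 ∨ x r = 1)
    (hy : ∀ r, y r = 0 ∨ y r = 1) : 0 ≤ dotp x y := by
  apply Finset.sum_nonneg
  intro r _
  rcases hx r with h | h <;> rcases hy r with h' | h' <;> simp [h, h']

lemma dotp_le {d : ℕ} {x y : Fin d → ℝ} (hx : ∀ r, x r = 0 ∨ x r = 1)
    (hy : ∀ r, y r = 0 ∨ y r = 1) : dotp x y ≤ d := by
  have h : dotp x y ≤ ∑ _r : Fin d, (1 : ℝ) := by
    apply Finset.sum_le_sum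
    intro r _
    rcases hx r with h | h <;> rcases hy r with h' | h' <;> simp [h, h']
  simpa using h

lemma dotp_le_sub_one {d t : ℕ} {x y : Fin d → ℝ} (hx : ∀ r, x r = 0 ∨ x r = 1)
    (hy : ∀ r, y r = 0 ∨ y r = 1) (h : dotp x y < t) : dotp x y ≤ (t : ℝ) - 1 := by
  obtain ⟨m, hm⟩ := dotp_nat hx hy
  rw [hm] at h ⊢
  have hmt : m < t := by exact_mod_cast h
  have h2 : (m : ℝ) + 1 ≤ t := by exact_mod_cast Nat.succ_le_of_lt hmt
  linarith

set_option maxHeartbeats 1000000 in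
/-- Case analysis underlying Appendix Theorem 6: softmax dot-product
self-attention with element-wise additive error at most `n^(-3d) e^(-3d²)`. -/
theorem tvpp_softmax_add_approx (n d t : ℕ) (hn : 2 ≤ n) (hd : 1 ≤ d)
    (ht1 : 1 ≤ t) (htd : t ≤ d)
    (a b : Fin n → Fin d → ℝ)
    (ha : ∀ i r, a i r = 0 ∨ a i r = 1) (hb : ∀ i r, b i r = 0 ∨ b i r = 1)
    (μ : ℝ) (hμ0 : 0 ≤ μ)
    (hμub : μ ≤ (n : ℝ) ^ (-(3 * (d : ℤ))) * Real.exp (-(3 * (d : ℝ) ^ 2)))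
    (C : ℝ) (hC : C = Real.log n + d)
    (N D Y : Fin n → ℝ)
    (hN : ∀ i, N i = ∑ j, Real.exp (C * dotp (a i) (b j)))
    (hD : ∀ i, D i = ∑ j, Real.exp (dotp (a i) (a j)))
    (hY : ∀ i, Y i = N i / (D i + N i))
    (Yhat : Fin n → ℝ)
    (hYhat : ∀ i, |Yhat i - Y i| ≤ μ) :
    (∃ i j, (t : ℝ) ≤ dotp (a i) (b j)) ↔
      (∃ i, Yhat i > Real.exp (C * ((t : ℝ) - 1)) /
        (Real.exp (C * ((t : ℝ) - 1)) + 1) + μ) := by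
  have hnR : (2 : ℝ) ≤ (n : ℝ) := by exact_mod_cast hn
  have hn0 : (0 : ℝ) < n := by linarith
  have hdR : (1 : ℝ) ≤ (d : ℝ) := by exact_mod_cast hd
  have htR : (1 : ℝ) ≤ (t : ℝ) := by exact_mod_cast ht1
  have htdR : (t : ℝ) ≤ (d : ℝ) := by exact_mod_cast htd
  have hlog : Real.log 2 ≤ Real.log n := Real.log_le_log (by norm_num) hnR
  have hlog0 : 0 < Real.log n := Real.log_pos (by linarith)
  have hC0 : 0 < C := by rw [hC]; linarith
  have hEC : Real.exp C = n * Real.exp d := by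
    rw [hC, Real.exp_add, Real.exp_log hn0]
  -- exp C ≥ 4
  have hexpd : (2 : ℝ) ≤ Real.exp d := by
    have h1 : (2 : ℝ) ≤ Real.exp 1 := by
      have := Real.add_one_le_exp (1 : ℝ); linarith
    calc (2 : ℝ) ≤ Real.exp 1 := h1
      _ ≤ Real.exp d := Real.exp_le_exp.2 hdR
  have hEC4 : (4 : ℝ) ≤ Real.exp C := by
    rw [hEC]; nlinarith [Real.exp_pos (d : ℝ)]
  -- μ ≤ exp(-(3 d C))
  have hμ3 : μ ≤ Real.exp (-(3 * (d : ℝ) * C)) := by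
    have h1 : ((n : ℝ)) ^ (-(3 * (d : ℤ))) = Real.exp (-(3 * (d : ℝ)) * Real.log n) := by
      rw [← Real.rpow_intCast (n : ℝ) (-(3 * (d : ℤ)))]
      rw [Real.rpow_def_of_pos hn0]
      push_cast
      ring_nf
    calc μ ≤ (n : ℝ) ^ (-(3 * (d : ℤ))) * Real.exp (-(3 * (d : ℝ) ^ 2)) := hμub
      _ = Real.exp (-(3 * (d : ℝ) * C)) := by
          rw [h1, ← Real.exp_add, hC]; ring_nf
  set A := Real.exp (C * ((t : ℝ) - 1)) with hA
  have hA0 : 0 < A := Real.exp_pos _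
  set E := Real.exp C with hE
  have hE0 : 0 < E := Real.exp_pos _
  have hAE : A * E = Real.exp (C * (t : ℝ)) := by
    rw [hA, hE, ← Real.exp_add]; ring_nf
  clear_value A E
  constructor
  · rintro ⟨i, j, hij⟩
    refine ⟨i, ?_⟩
    -- lower bound on N i
    have : Nontrivial (Fin n) := Fin.nontrivial_iff_two_le.mpr hn
    obtain ⟨k, hk⟩ := exists_ne j
    have hNlb : Real.exp (C * t) + 1 ≤ N i := by
      rw [hN i]
      have hsub : ({j, k} : Finset (Fin n)) ⊆ Finset.univ := Finset.subset_univ _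
      have hpair : ∑ j' ∈ ({j, k} : Finset (Fin n)), Real.exp (C * dotp (a i) (b j'))
          ≤ ∑ j', Real.exp (C * dotp (a i) (b j')) := by
        apply Finset.sum_le_sum_of_subset_of_nonneg hsub
        intro _ _ _; positivity
      rw [Finset.sum_pair (Ne.symm hk)] at hpair
      have h1 : Real.exp (C * t) ≤ Real.exp (C * dotp (a i) (b j)) := by
        apply Real.exp_le_exp.2
        exact mul_le_mul_of_nonneg_left hij (le_of_lt hC0)
      have h2 : (1 : ℝ) ≤ Real.exp (C * dotp (a i) (b k)) := by
        apply Real.one_le_exp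
        exact mul_nonneg (le_of_lt hC0) (dotp_nonneg (ha i) (hb k))
      linarith
    -- upper bound on D i
    have hDub : D i ≤ E := by
      rw [hD i, hEC]
      calc ∑ j', Real.exp (dotp (a i) (a j')) ≤ ∑ _j' : Fin n, Real.exp d := by
            apply Finset.sum_le_sum
            intro j' _
            exact Real.exp_le_exp.2 (dotp_le (ha i) (ha j'))
        _ = n * Real.exp d := by simp [mul_comm]
    have hD0 : 0 < D i := by
      rw [hD i]
      apply Finset.sum_pos (fun j' _ => Real.exp_pos _)
      exact Finset.univ_nonempty
    set M := Real.exp (C * t) + 1 with hMdef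
    have hM0 : (0 : ℝ) < M := by positivity
    have hN0 : 0 < N i := lt_of_lt_of_le hM0 hNlb
    clear_value M
    have hMAE : M = A * E + 1 := by
      rw [hMdef, ← hAE]
    -- Y i ≥ M / (E + M)
    have hY1 : M / (E + M) ≤ Y i := by
      rw [hY i, div_le_div_iff₀ (by positivity) (by positivity)]
      nlinarith [mul_le_mul hDub hNlb (le_of_lt hM0) (le_of_lt hE0)]
    -- gap identity
    have hgap : A / (A + 1) + 1 / ((A + 1) * (E + M)) = M / (E + M) := by
      rw [hMAE]
      field_simp
      ring
    -- bound the gap denominator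
    have hAub : A ≤ Real.exp (C * ((d : ℝ) - 1)) := by
      rw [hA]
      apply Real.exp_le_exp.2
      apply mul_le_mul_of_nonneg_left (by linarith) (le_of_lt hC0)
    have h1le : (1 : ℝ) ≤ Real.exp (C * ((d : ℝ) - 1)) := by
      apply Real.one_le_exp
      apply mul_nonneg (le_of_lt hC0) (by linarith)
    have hEMub : E + M ≤ 3 * Real.exp (C * d) := by
      have e1 : E ≤ Real.exp (C * d) := by
        rw [hE]
        apply Real.exp_le_exp.2
        nlinarith
      have e2 : Real.exp (C * t) ≤ Real.exp (C * d) := by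
        apply Real.exp_le_exp.2
        exact mul_le_mul_of_nonneg_left htdR (le_of_lt hC0)
      have e3 : (1 : ℝ) ≤ Real.exp (C * d) := by
        apply Real.one_le_exp; positivity
      rw [hMdef]; linarith
    have hden : (A + 1) * (E + M) ≤ 6 * Real.exp (C * (2 * d - 1)) := by
      have hAle : A + 1 ≤ 2 * Real.exp (C * ((d : ℝ) - 1)) := by linarith
      calc (A + 1) * (E + M) ≤ (2 * Real.exp (C * ((d : ℝ) - 1))) * (3 * Real.exp (C * d)) := by
            apply mul_le_mul hAle hEMub (by positivity) (by positivity)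
        _ = 6 * (Real.exp (C * ((d : ℝ) - 1)) * Real.exp (C * d)) := by ring
        _ = 6 * Real.exp (C * (2 * d - 1)) := by rw [← Real.exp_add]; ring_nf
    -- 2 μ < 1 / ((A+1)(E+M))
    have hμsmall : 2 * μ < 1 / ((A + 1) * (E + M)) := by
      have hd1 : 0 < (A + 1) * (E + M) := by positivity
      rw [lt_div_iff₀ hd1]
      have step : 2 * μ * ((A + 1) * (E + M))
          ≤ 2 * Real.exp (-(3 * (d : ℝ) * C)) * (6 * Real.exp (C * (2 * d - 1))) := by
        have hμ0' : 0 ≤ 2 * μ := by linarith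
        have := mul_le_mul (by linarith [hμ3] : 2 * μ ≤ 2 * Real.exp (-(3 * (d : ℝ) * C)))
          hden (by positivity) (by positivity)
        linarith
      have heq : 2 * Real.exp (-(3 * (d : ℝ) * C)) * (6 * Real.exp (C * (2 * d - 1)))
          = 12 * Real.exp (-(C * ((d : ℝ) + 1))) := by
        rw [show 2 * Real.exp (-(3 * (d : ℝ) * C)) * (6 * Real.exp (C * (2 * d - 1)))
            = 12 * (Real.exp (-(3 * (d : ℝ) * C)) * Real.exp (C * (2 * d - 1))) from by ring,
          ← Real.exp_add]
        ring_nf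
      have hfin : 12 * Real.exp (-(C * ((d : ℝ) + 1))) < 1 := by
        rw [Real.exp_neg]
        rw [mul_inv_lt_iff₀ (Real.exp_pos _)]
        have : Real.exp (2 * C) ≤ Real.exp (C * ((d : ℝ) + 1)) := by
          apply Real.exp_le_exp.2; nlinarith
        have h2C : (16 : ℝ) ≤ Real.exp (2 * C) := by
          have : Real.exp (2 * C) = E * E := by rw [hE, ← Real.exp_add]; ring_nf
          rw [this]; nlinarith
        linarith
      calc 2 * μ * ((A + 1) * (E + M)) ≤ 12 * Real.exp (-(C * ((d : ℝ) + 1))) := by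
            rw [← heq]; exact step
        _ < 1 := hfin
    -- conclude
    have hYgt : A / (A + 1) + 2 * μ < Y i := by
      have := hgap
      linarith
    have habs := abs_le.1 (hYhat i)
    have : A / (A + 1) + μ < Yhat i := by linarith [habs.1]
    exact this
  · rintro ⟨i, hi⟩
    haveI : Nonempty (Fin n) := Fin.pos_iff_nonempty.mp (by omega)
    by_contra hcon
    push_neg at hcon
    -- all dot products ≤ t - 1
    have hdots : ∀ j, dotp (a i) (b j) ≤ (t : ℝ) - 1 := fun j =>
      dotp_le_sub_one (ha i) (hb j) (hcon i j)
    have hNub : N i ≤ n * A := by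
      rw [hN i]
      calc ∑ j, Real.exp (C * dotp (a i) (b j)) ≤ ∑ _j : Fin n, A := by
            apply Finset.sum_le_sum
            intro j _
            rw [hA]
            exact Real.exp_le_exp.2 (mul_le_mul_of_nonneg_left (hdots j) (le_of_lt hC0))
        _ = n * A := by simp [mul_comm]
    have hDlb : (n : ℝ) ≤ D i := by
      rw [hD i]
      calc (n : ℝ) = ∑ _j : Fin n, (1 : ℝ) := by simp
        _ ≤ ∑ j, Real.exp (dotp (a i) (a j)) := by
            apply Finset.sum_le_sum
            intro j _
            exact Real.one_le_exp (dotp_nonneg (ha i) (ha j))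
    have hN0 : 0 < N i := by
      rw [hN i]
      apply Finset.sum_pos (fun j _ => Real.exp_pos _)
      exact Finset.univ_nonempty
    have hD0 : (0 : ℝ) < D i := lt_of_lt_of_le (by linarith) hDlb
    have hYub : Y i ≤ A / (A + 1) := by
      rw [hY i, div_le_div_iff₀ (by positivity) (by positivity)]
      nlinarith [mul_le_mul hNub (le_refl (1:ℝ)) zero_le_one (by positivity : (0:ℝ) ≤ (n:ℝ) * A),
        mul_le_mul_of_nonneg_left hDlb (le_of_lt hA0)]
    have habs := abs_le.1 (hYhat i)
    have : Yhat i ≤ A / (A + 1) + μ := by linarith [habs.2]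
    linarith [hi]
end
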